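/- Let q be an even prime power. In PG(2, q), the union of the four lines {X=0}, {Y=0}, {Z=0}, {X+Y+Z=0} together with the point (1:1:1) is a 3-fold blocking set of size 4q − 1: every line of PG(2, q) meets this set in at least 3 points. -/

import Mathlib

/-- The relative trace `x ↦ x + x^q + ⋯ + x^{q^{h-1}}`. -/
def Tr (q h : ℕ) {K : Type*} [Field K] (x : K) : K :=
  ∑ i ∈ Finset.range h, x ^ q ^ i

/-- The line of `PG(2, K)` with equation `a 0 * X + a 1 * Y + a 2 * Z = 0`. -/
def projLine {K : Type*} [Field K] (a : Fin 3 → K) :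
    Set (Projectivization K (Fin 3 → K)) :=
  {P | ∑ i, a i * P.rep i = 0}

/-- A subset of `PG(2, K)` is a line if it is `projLine a` for some nonzero `a`. -/
def IsLine {K : Type*} [Field K] (ℓ : Set (Projectivization K (Fin 3 → K))) : Prop :=
  ∃ a : Fin 3 → K, a ≠ 0 ∧ ℓ = projLine a

/-- The trace-construction point set
`{(x : Tr(x) : y) : x ∈ F_{q^h}, y ∈ F_q, (x,y) ≠ (0,0)}` in `PG(2, q^h)`. -/
def traceSet (q h : ℕ) (F K : Type*) [Field F] [Field K] [Algebra F K] :
    Set (Projectivization K (Fin 3 → K)) :=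
  {P | ∃ (x : K) (y : F), (x ≠ 0 ∨ y ≠ 0) ∧
    ∃ hv : (![x, Tr q h x, algebraMap F K y] : Fin 3 → K) ≠ 0,
      P = Projectivization.mk K (![x, Tr q h x, algebraMap F K y]) hv}

section Helpers
variable {K : Type*} [Field K]

@[simp] lemma vec3_two (x0 x1 x2 : K) : (![x0,x1,x2] : Fin 3 → K) 2 = x2 := rfl

lemma vne3 {x0 x1 x2 : K} (i : Fin 3) (h : ![x0,x1,x2] i ≠ 0) :
    (![x0,x1,x2] : Fin 3 → K) ≠ 0 :=
  fun hc => h (by rw [hc]; rfl)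

lemma mk3_eq_iff {x0 x1 x2 y0 y1 y2 : K} (hx : (![x0,x1,x2] : Fin 3 → K) ≠ 0)
    (hy : (![y0,y1,y2] : Fin 3 → K) ≠ 0) :
    Projectivization.mk K ![x0,x1,x2] hx = Projectivization.mk K ![y0,y1,y2] hy ↔
      ∃ c : K, c ≠ 0 ∧ x0 = c * y0 ∧ x1 = c * y1 ∧ x2 = c * y2 := by
  rw [Projectivization.mk_eq_mk_iff']
  constructor
  · rintro ⟨c, hc⟩
    have hc0 : c ≠ 0 := by
      rintro rfl
      rw [zero_smul] at hc
      exact hx hc.symm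
    refine ⟨c, hc0, ?_, ?_, ?_⟩
    · simpa using (congrFun hc 0).symm
    · simpa using (congrFun hc 1).symm
    · simpa using (congrFun hc 2).symm
  · rintro ⟨c, hc, h0, h1, h2⟩
    exact ⟨c, funext fun i => by fin_cases i <;> simp [h0, h1, h2]⟩

lemma mk_ne_of {v w : Fin 3 → K} (hv : v ≠ 0) (hw : w ≠ 0) (i : Fin 3)
    (h1 : v i = 0) (h2 : w i ≠ 0) :
    Projectivization.mk K v hv ≠ Projectivization.mk K w hw := by
  intro h
  rw [Projectivization.mk_eq_mk_iff'] at h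
  obtain ⟨c, hc⟩ := h
  have hci : c * w i = 0 := by
    have := congrFun hc i
    simpa [h1] using this
  rcases mul_eq_zero.1 hci with rfl | h
  · rw [zero_smul] at hc; exact hv hc.symm
  · exact h2 h

lemma mem_line_mk {a : Fin 3 → K} {v : Fin 3 → K} (hv : v ≠ 0) :
    Projectivization.mk K v hv ∈ projLine a ↔ a 0 * v 0 + a 1 * v 1 + a 2 * v 2 = 0 := by
  obtain ⟨c, hc⟩ := Projectivization.exists_smul_eq_mk_rep K v hv
  have hrw : ∀ i, (Projectivization.mk K v hv).rep i = (c : K) * v i := by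
    intro i
    rw [← hc]; simp [Units.smul_def]
  show (∑ i, a i * (Projectivization.mk K v hv).rep i = 0) ↔ _
  rw [Fin.sum_univ_three, hrw 0, hrw 1, hrw 2]
  rw [show a 0 * ((c:K) * v 0) + a 1 * ((c:K) * v 1) + a 2 * ((c:K) * v 2)
      = (c:K) * (a 0 * v 0 + a 1 * v 1 + a 2 * v 2) by ring]
  simp [c.ne_zero]

lemma three_le_ncard {α : Type*} [Finite α] {s : Set α} {p q r : α}
    (hp : p ∈ s) (hq : q ∈ s) (hr : r ∈ s)
    (hpq : p ≠ q) (hpr : p ≠ r) (hqr : q ≠ r) : 3 ≤ s.ncard := by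
  have hsub : ({p, q, r} : Set α) ⊆ s := by
    rintro x (rfl | rfl | rfl) <;> assumption
  have h3 : ({p, q, r} : Set α).ncard = 3 := by
    rw [Set.ncard_insert_of_notMem (by simp [hpq, hpr]),
        Set.ncard_insert_of_notMem (by simp [hqr]), Set.ncard_singleton]
  calc 3 = ({p, q, r} : Set α).ncard := h3.symm
    _ ≤ s.ncard := Set.ncard_le_ncard hsub (Set.toFinite s)

lemma eq_mk_of {K : Type*} [Field K] (P : Projectivization K (Fin 3 → K))
    {w : Fin 3 → K} (hw : w ≠ 0) (c : K) (hc : ∀ i, P.rep i = c * w i) :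
    P = Projectivization.mk K w hw := by
  conv_lhs => rw [← P.mk_rep]
  rw [Projectivization.mk_eq_mk_iff']
  exact ⟨c, funext fun i => by simp [Pi.smul_apply, smul_eq_mul, (hc i).symm]⟩

end Helpers

/-- For `q` even, the four lines `{X=0}, {Y=0}, {Z=0}, {X+Y+Z=0}` of
`PG(2, q)` together with the point `(1:1:1)` form a 3-fold blocking set of size
`4q − 1`. -/
theorem stmt_18 {K : Type*} [Field K] [Fintype K]
    (q : ℕ) (hq : IsPrimePow q) (hcard : Fintype.card K = q)
    (heven : ringChar K = 2)
    (B : Set (Projectivization K (Fin 3 → K)))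
    (hB : B = projLine ![1, 0, 0] ∪ projLine ![0, 1, 0] ∪ projLine ![0, 0, 1]
      ∪ projLine ![1, 1, 1]
      ∪ {Projectivization.mk K ![1, 1, 1] (by intro hc; simpa using congrFun hc 0)}) :
    B.ncard = 4 * q - 1 ∧
    ∀ a : Fin 3 → K, a ≠ 0 → 3 ≤ (projLine a ∩ B).ncard := by
  haveI : CharP K 2 := heven ▸ ringChar.charP K
  haveI : Finite (Projectivization K (Fin 3 → K)) := Quotient.finite _
  have two0 : (2 : K) = 0 := by exact_mod_cast CharP.cast_eq_zero K 2
  have memB1 : ∀ p, p ∈ projLine ![(1:K),0,0] → p ∈ B := fun p h => by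
    rw [hB]; exact Or.inl (Or.inl (Or.inl (Or.inl h)))
  have memB2 : ∀ p, p ∈ projLine ![(0:K),1,0] → p ∈ B := fun p h => by
    rw [hB]; exact Or.inl (Or.inl (Or.inl (Or.inr h)))
  have memB3 : ∀ p, p ∈ projLine ![(0:K),0,1] → p ∈ B := fun p h => by
    rw [hB]; exact Or.inl (Or.inl (Or.inr h))
  have memB4 : ∀ p, p ∈ projLine ![(1:K),1,1] → p ∈ B := fun p h => by
    rw [hB]; exact Or.inl (Or.inr h)
  have memB5 : ∀ (h : (![(1:K),1,1] : Fin 3 → K) ≠ 0),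
      Projectivization.mk K ![1,1,1] h ∈ B := fun h => by
    rw [hB]; exact Or.inr rfl
  constructor
  · have hq2 : 2 ≤ q := hcard ▸ Fintype.one_lt_card
    set F1 : K → Projectivization K (Fin 3 → K) :=
      fun t => Projectivization.mk K ![0,1,t] (vne3 1 (by norm_num)) with hF1
    set F3 : K → Projectivization K (Fin 3 → K) :=
      fun t => Projectivization.mk K ![1,0,t] (vne3 0 (by norm_num)) with hF3
    set F4 : K → Projectivization K (Fin 3 → K) :=
      fun s => Projectivization.mk K ![1,s,0] (vne3 0 (by norm_num)) with hF4
    set F5 : K → Projectivization K (Fin 3 → K) :=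
      fun y => Projectivization.mk K ![1,y,1+y] (vne3 0 (by norm_num)) with hF5
    have hP001 : (![0,0,1] : Fin 3 → K) ≠ 0 := vne3 2 (by norm_num)
    have hP111 : (![1,1,1] : Fin 3 → K) ≠ 0 := vne3 0 (by norm_num)
    have hBeq : B = F1 '' Set.univ ∪ ({Projectivization.mk K ![0,0,1] hP001} ∪
        (F3 '' Set.univ ∪ (F4 '' {s : K | s ≠ 0} ∪
        (F5 '' {y : K | y ≠ 0 ∧ y ≠ 1} ∪ {Projectivization.mk K ![1,1,1] hP111})))) := by
      rw [hB]; ext P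
      constructor
      · rintro ((((h | h) | h) | h) | h)
        · -- X = 0
          have h0 : P.rep 0 = 0 := by simpa [projLine, Fin.sum_univ_three] using h
          by_cases hv1 : P.rep 1 = 0
          · have hv2 : P.rep 2 ≠ 0 := fun h2c =>
              P.rep_nonzero (funext fun i => by fin_cases i <;> simp [h0, hv1, h2c])
            exact Or.inr (Or.inl (eq_mk_of P hP001 (P.rep 2)
              (fun i => by fin_cases i <;> simp [h0, hv1])))
          · refine Or.inl ⟨P.rep 2 / P.rep 1, trivial, (eq_mk_of P _ (P.rep 1)
              (fun i => ?_)).symm⟩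
            fin_cases i <;> simp [h0] <;> field_simp
        · -- Y = 0
          have h1 : P.rep 1 = 0 := by simpa [projLine, Fin.sum_univ_three] using h
          by_cases hv0 : P.rep 0 = 0
          · have hv2 : P.rep 2 ≠ 0 := fun h2c =>
              P.rep_nonzero (funext fun i => by fin_cases i <;> simp [h1, hv0, h2c])
            exact Or.inr (Or.inl (eq_mk_of P hP001 (P.rep 2)
              (fun i => by fin_cases i <;> simp [h1, hv0])))
          · refine Or.inr (Or.inr (Or.inl ⟨P.rep 2 / P.rep 0, trivial,
              (eq_mk_of P _ (P.rep 0) (fun i => ?_)).symm⟩))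
            fin_cases i <;> simp [h1] <;> field_simp
        · -- Z = 0
          have h2 : P.rep 2 = 0 := by simpa [projLine, Fin.sum_univ_three] using h
          by_cases hv0 : P.rep 0 = 0
          · have hv1 : P.rep 1 ≠ 0 := fun h1c =>
              P.rep_nonzero (funext fun i => by fin_cases i <;> simp [h2, hv0, h1c])
            exact Or.inl ⟨0, trivial, (eq_mk_of P _ (P.rep 1)
              (fun i => by fin_cases i <;> simp [h2, hv0])).symm⟩
          · by_cases hv1 : P.rep 1 = 0
            · exact Or.inr (Or.inr (Or.inl ⟨0, trivial, (eq_mk_of P _ (P.rep 0)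
                (fun i => by fin_cases i <;> simp [h2, hv1])).symm⟩))
            · refine Or.inr (Or.inr (Or.inr (Or.inl ⟨P.rep 1 / P.rep 0,
                div_ne_zero hv1 hv0, (eq_mk_of P _ (P.rep 0) (fun i => ?_)).symm⟩)))
              fin_cases i <;> simp [h2] <;> field_simp
        · -- X + Y + Z = 0
          have hsum : P.rep 0 + P.rep 1 + P.rep 2 = 0 := by
            simpa [projLine, Fin.sum_univ_three] using h
          by_cases hv0 : P.rep 0 = 0
          · have h21 : P.rep 2 = P.rep 1 := by
              linear_combination hsum - hv0 - P.rep 1 * two0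
            have hv1 : P.rep 1 ≠ 0 := fun h1c =>
              P.rep_nonzero (funext fun i => by
                fin_cases i <;> simp [hv0, h1c, h21.trans h1c])
            exact Or.inl ⟨1, trivial, (eq_mk_of P _ (P.rep 1)
              (fun i => by fin_cases i <;> simp [hv0, h21])).symm⟩
          · by_cases hy0 : P.rep 1 = 0
            · have h20 : P.rep 2 = P.rep 0 := by
                linear_combination hsum - hy0 - P.rep 0 * two0
              exact Or.inr (Or.inr (Or.inl ⟨1, trivial, (eq_mk_of P _ (P.rep 0)
                (fun i => by fin_cases i <;> simp [hy0, h20])).symm⟩))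
            · by_cases hy1 : P.rep 1 = P.rep 0
              · have h20 : P.rep 2 = 0 := by
                  linear_combination hsum - hy1 - P.rep 0 * two0
                exact Or.inr (Or.inr (Or.inr (Or.inl ⟨1, one_ne_zero,
                  (eq_mk_of P _ (P.rep 0)
                    (fun i => by fin_cases i <;> simp [hy1, h20])).symm⟩)))
              · have hr2 : P.rep 2 = P.rep 0 + P.rep 1 := by
                  linear_combination hsum - (P.rep 0 + P.rep 1) * two0
                refine Or.inr (Or.inr (Or.inr (Or.inr (Or.inl
                  ⟨P.rep 1 / P.rep 0, ⟨div_ne_zero hy0 hv0, fun hc => hy1 ?_⟩,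
                    (eq_mk_of P _ (P.rep 0) (fun i => ?_)).symm⟩))))
                · exact (div_eq_one_iff_eq hv0).1 hc
                · fin_cases i <;> simp [hr2] <;> field_simp <;> ring
        · -- the point (1:1:1)
          exact Or.inr (Or.inr (Or.inr (Or.inr (Or.inr h))))
      · rintro (⟨t, -, rfl⟩ | (h | (⟨t, -, rfl⟩ | (⟨s, hs, rfl⟩ | (⟨y, hy, rfl⟩ | h)))))
        · exact Or.inl (Or.inl (Or.inl (Or.inl ((mem_line_mk _).2 (by norm_num)))))
        · exact Or.inl (Or.inl (Or.inl (Or.inl (h ▸ (mem_line_mk _).2 (by norm_num)))))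
        · exact Or.inl (Or.inl (Or.inl (Or.inr ((mem_line_mk _).2 (by norm_num)))))
        · exact Or.inl (Or.inl (Or.inr ((mem_line_mk _).2 (by norm_num))))
        · exact Or.inl (Or.inr ((mem_line_mk _).2
            (by simp; linear_combination (1 + y) * two0)))
        · exact Or.inr h
    -- disjointness
    have d1 : Disjoint (F1 '' Set.univ) ({Projectivization.mk K ![0,0,1] hP001} ∪
        (F3 '' Set.univ ∪ (F4 '' {s : K | s ≠ 0} ∪
        (F5 '' {y : K | y ≠ 0 ∧ y ≠ 1} ∪ {Projectivization.mk K ![1,1,1] hP111})))) := by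
      rw [Set.disjoint_left]
      rintro p ⟨t, -, rfl⟩ (h | (⟨t', -, h⟩ | (⟨s, hs, h⟩ | (⟨y, hy, h⟩ | h))))
      all_goals try simp only [hF1, hF3, hF4, hF5] at h
      · refine mk_ne_of _ _ 1 ?_ ?_ h.symm <;> norm_num
      · refine mk_ne_of _ _ 0 ?_ ?_ h.symm <;> norm_num
      · refine mk_ne_of _ _ 0 ?_ ?_ h.symm <;> norm_num
      · refine mk_ne_of _ _ 0 ?_ ?_ h.symm <;> norm_num
      · refine mk_ne_of _ _ 0 ?_ ?_ h <;> norm_num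
    have d2 : Disjoint ({Projectivization.mk K ![0,0,1] hP001} : Set _)
        (F3 '' Set.univ ∪ (F4 '' {s : K | s ≠ 0} ∪
        (F5 '' {y : K | y ≠ 0 ∧ y ≠ 1} ∪ {Projectivization.mk K ![1,1,1] hP111}))) := by
      rw [Set.disjoint_left]
      rintro p rfl (⟨t', -, h⟩ | (⟨s, hs, h⟩ | (⟨y, hy, h⟩ | h)))
      all_goals try simp only [hF3, hF4, hF5] at h
      · refine mk_ne_of _ _ 0 ?_ ?_ h.symm <;> norm_num
      · refine mk_ne_of _ _ 0 ?_ ?_ h.symm <;> norm_num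
      · refine mk_ne_of _ _ 0 ?_ ?_ h.symm <;> norm_num
      · refine mk_ne_of _ _ 0 ?_ ?_ h <;> norm_num
    have d3 : Disjoint (F3 '' Set.univ) (F4 '' {s : K | s ≠ 0} ∪
        (F5 '' {y : K | y ≠ 0 ∧ y ≠ 1} ∪ {Projectivization.mk K ![1,1,1] hP111})) := by
      rw [Set.disjoint_left]
      rintro p ⟨t, -, rfl⟩ (⟨s, hs, h⟩ | (⟨y, hy, h⟩ | h))
      all_goals try simp only [hF1, hF3, hF4, hF5] at h
      · refine mk_ne_of _ _ 1 ?_ ?_ h.symm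
        · norm_num
        · simpa using hs
      · refine mk_ne_of _ _ 1 ?_ ?_ h.symm
        · norm_num
        · simpa using hy.1
      · refine mk_ne_of _ _ 1 ?_ ?_ h <;> norm_num
    have d4 : Disjoint (F4 '' {s : K | s ≠ 0})
        (F5 '' {y : K | y ≠ 0 ∧ y ≠ 1} ∪ {Projectivization.mk K ![1,1,1] hP111}) := by
      rw [Set.disjoint_left]
      rintro p ⟨s, hs, rfl⟩ (⟨y, hy, h⟩ | h)
      all_goals try simp only [hF4, hF5] at h
      · refine mk_ne_of _ _ 2 ?_ ?_ h.symm
        · norm_num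
        · have h1y : (1 : K) + y ≠ 0 := fun hc => hy.2 (by linear_combination hc - two0)
          simpa using h1y
      · refine mk_ne_of _ _ 2 ?_ ?_ h <;> norm_num
    have d5 : Disjoint (F5 '' {y : K | y ≠ 0 ∧ y ≠ 1})
        ({Projectivization.mk K ![1,1,1] hP111} : Set _) := by
      rw [Set.disjoint_left]
      rintro p ⟨y, hy, rfl⟩ h
      simp only [Set.mem_singleton_iff, hF5] at h
      rw [mk3_eq_iff] at h
      obtain ⟨c, hc, e0, e1, e2⟩ := h
      rw [mul_one] at e0 e1
      exact hy.2 (e1.trans e0.symm)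
    -- cardinalities of the pieces
    have c1 : (F1 '' Set.univ).ncard = q := by
      rw [Set.ncard_image_of_injOn, Set.ncard_univ, Nat.card_eq_fintype_card, hcard]
      rintro t - t' - h
      simp only [hF1] at h
      rw [mk3_eq_iff] at h
      obtain ⟨c, hc, e0, e1, e2⟩ := h
      rw [mul_one] at e1
      rw [e2, ← e1, one_mul]
    have c3 : (F3 '' Set.univ).ncard = q := by
      rw [Set.ncard_image_of_injOn, Set.ncard_univ, Nat.card_eq_fintype_card, hcard]
      rintro t - t' - h
      simp only [hF3] at h
      rw [mk3_eq_iff] at h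
      obtain ⟨c, hc, e0, e1, e2⟩ := h
      rw [mul_one] at e0
      rw [e2, ← e0, one_mul]
    have c4 : (F4 '' {s : K | s ≠ 0}).ncard = q - 1 := by
      rw [Set.ncard_image_of_injOn]
      · have h01 : ({s : K | s ≠ 0}) = ({0} : Set K)ᶜ := by ext x; simp
        have := Set.ncard_add_ncard_compl ({0} : Set K)
        rw [Set.ncard_singleton, Nat.card_eq_fintype_card, hcard] at this
        rw [h01]; omega
      · intro t ht t' ht' h
        simp only [hF4] at h
        rw [mk3_eq_iff] at h
        obtain ⟨c, hc, e0, e1, e2⟩ := h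
        rw [mul_one] at e0
        rw [e1, ← e0, one_mul]
    have c5 : (F5 '' {y : K | y ≠ 0 ∧ y ≠ 1}).ncard = q - 2 := by
      rw [Set.ncard_image_of_injOn]
      · have h01 : ({y : K | y ≠ 0 ∧ y ≠ 1}) = ({0, 1} : Set K)ᶜ := by ext x; simp
        have := Set.ncard_add_ncard_compl ({0, 1} : Set K)
        rw [Set.ncard_pair (zero_ne_one), Nat.card_eq_fintype_card, hcard] at this
        rw [h01]; omega
      · intro t ht t' ht' h
        simp only [hF5] at h
        rw [mk3_eq_iff] at h
        obtain ⟨c, hc, e0, e1, e2⟩ := h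
        rw [mul_one] at e0
        rw [e1, ← e0, one_mul]
    rw [hBeq, Set.ncard_union_eq d1, Set.ncard_union_eq d2, Set.ncard_union_eq d3,
      Set.ncard_union_eq d4, Set.ncard_union_eq d5, c1, c3, c4, c5,
      Set.ncard_singleton, Set.ncard_singleton]
    omega
  · intro a ha
    by_cases h0 : a 0 = 0 <;> by_cases h1 : a 1 = 0 <;> by_cases h2 : a 2 = 0
    -- case all zero
    · exact absurd (funext fun i => by fin_cases i <;> assumption) ha
    -- a0 = 0, a1 = 0, a2 ≠ 0  : line Z = 0
    · refine three_le_ncard (p := Projectivization.mk K ![0,1,0] (vne3 1 (by norm_num)))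
        (q := Projectivization.mk K ![1,0,0] (vne3 0 (by norm_num)))
        (r := Projectivization.mk K ![1,1,0] (vne3 0 (by norm_num)))
        ⟨(mem_line_mk _).2 (by simp [h0, h1]), memB3 _ ((mem_line_mk _).2 (by norm_num))⟩
        ⟨(mem_line_mk _).2 (by simp [h0, h1]), memB3 _ ((mem_line_mk _).2 (by norm_num))⟩
        ⟨(mem_line_mk _).2 (by simp [h0, h1]), memB3 _ ((mem_line_mk _).2 (by norm_num))⟩
        (mk_ne_of _ _ 0 (by norm_num) (by norm_num))
        (mk_ne_of _ _ 0 (by norm_num) (by norm_num))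
        (mk_ne_of _ _ 1 (by norm_num) (by norm_num))
    -- a0 = 0, a1 ≠ 0, a2 = 0 : line Y = 0
    · refine three_le_ncard (p := Projectivization.mk K ![0,0,1] (vne3 2 (by norm_num)))
        (q := Projectivization.mk K ![1,0,0] (vne3 0 (by norm_num)))
        (r := Projectivization.mk K ![1,0,1] (vne3 0 (by norm_num)))
        ⟨(mem_line_mk _).2 (by simp [h0, h2]), memB2 _ ((mem_line_mk _).2 (by norm_num))⟩
        ⟨(mem_line_mk _).2 (by simp [h0, h2]), memB2 _ ((mem_line_mk _).2 (by norm_num))⟩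
        ⟨(mem_line_mk _).2 (by simp [h0, h2]), memB2 _ ((mem_line_mk _).2 (by norm_num))⟩
        (mk_ne_of _ _ 0 (by norm_num) (by norm_num))
        (mk_ne_of _ _ 0 (by norm_num) (by norm_num))
        (mk_ne_of _ _ 2 (by norm_num) (by norm_num))
    -- a0 = 0, a1 ≠ 0, a2 ≠ 0
    · have ha2 : (![(0:K), a 2, a 1] : Fin 3 → K) ≠ 0 := vne3 1 (by simpa using h2)
      by_cases he : a 1 = a 2
      · refine three_le_ncard
          (p := Projectivization.mk K ![0, a 2, a 1] ha2)
          (q := Projectivization.mk K ![1,0,0] (vne3 0 (by norm_num)))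
          (r := Projectivization.mk K ![1,1,1] (vne3 0 (by norm_num)))
          ⟨(mem_line_mk _).2 (by simp [h0]; linear_combination a 1 * a 2 * two0),
            memB1 _ ((mem_line_mk _).2 (by norm_num))⟩
          ⟨(mem_line_mk _).2 (by simp [h0]), memB2 _ ((mem_line_mk _).2 (by norm_num))⟩
          ⟨(mem_line_mk _).2 (by simp; linear_combination h0 + he + a 2 * two0),
            memB5 _⟩
          (mk_ne_of _ _ 0 (by norm_num) (by norm_num))
          (mk_ne_of _ _ 0 (by norm_num) (by norm_num))
          (mk_ne_of _ _ 1 (by norm_num) (by norm_num))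
      · have hs : a 1 + a 2 ≠ 0 := fun h => he (by linear_combination h - a 2 * two0)
        refine three_le_ncard
          (p := Projectivization.mk K ![0, a 2, a 1] ha2)
          (q := Projectivization.mk K ![1,0,0] (vne3 0 (by norm_num)))
          (r := Projectivization.mk K ![a 1 + a 2, a 2, a 1] (vne3 0 (by simpa using hs)))
          ⟨(mem_line_mk _).2 (by simp [h0]; linear_combination a 1 * a 2 * two0),
            memB1 _ ((mem_line_mk _).2 (by norm_num))⟩
          ⟨(mem_line_mk _).2 (by simp [h0]), memB2 _ ((mem_line_mk _).2 (by norm_num))⟩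
          ⟨(mem_line_mk _).2 (by simp [h0]; linear_combination a 1 * a 2 * two0),
            memB4 _ ((mem_line_mk _).2 (by simp; linear_combination (a 1 + a 2) * two0))⟩
          (mk_ne_of _ _ 0 (by norm_num) (by norm_num))
          (mk_ne_of _ _ 0 (by norm_num) (by simpa using hs))
          (mk_ne_of _ _ 1 (by norm_num) (by simpa using h2))
    -- a0 ≠ 0, a1 = 0, a2 = 0 : line X = 0
    · refine three_le_ncard (p := Projectivization.mk K ![0,0,1] (vne3 2 (by norm_num)))
        (q := Projectivization.mk K ![0,1,0] (vne3 1 (by norm_num)))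
        (r := Projectivization.mk K ![0,1,1] (vne3 1 (by norm_num)))
        ⟨(mem_line_mk _).2 (by simp [h1, h2]), memB1 _ ((mem_line_mk _).2 (by norm_num))⟩
        ⟨(mem_line_mk _).2 (by simp [h1, h2]), memB1 _ ((mem_line_mk _).2 (by norm_num))⟩
        ⟨(mem_line_mk _).2 (by simp [h1, h2]), memB1 _ ((mem_line_mk _).2 (by norm_num))⟩
        (mk_ne_of _ _ 1 (by norm_num) (by norm_num))
        (mk_ne_of _ _ 1 (by norm_num) (by norm_num))
        (mk_ne_of _ _ 2 (by norm_num) (by norm_num))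
    -- a0 ≠ 0, a1 = 0, a2 ≠ 0
    · have ha2 : (![a 2, (0:K), a 0] : Fin 3 → K) ≠ 0 := vne3 0 (by simpa using h2)
      by_cases he : a 0 = a 2
      · refine three_le_ncard
          (p := Projectivization.mk K ![0,1,0] (vne3 1 (by norm_num)))
          (q := Projectivization.mk K ![a 2, 0, a 0] ha2)
          (r := Projectivization.mk K ![1,1,1] (vne3 0 (by norm_num)))
          ⟨(mem_line_mk _).2 (by simp [h1]), memB1 _ ((mem_line_mk _).2 (by norm_num))⟩
          ⟨(mem_line_mk _).2 (by simp [h1]; linear_combination a 0 * a 2 * two0),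
            memB2 _ ((mem_line_mk _).2 (by norm_num))⟩
          ⟨(mem_line_mk _).2 (by simp; linear_combination h1 + he + a 2 * two0),
            memB5 _⟩
          (mk_ne_of _ _ 0 (by norm_num) (by simpa using h2))
          (mk_ne_of _ _ 0 (by norm_num) (by norm_num))
          (mk_ne_of _ _ 1 (by norm_num) (by norm_num))
      · have hs : a 0 + a 2 ≠ 0 := fun h => he (by linear_combination h - a 2 * two0)
        refine three_le_ncard
          (p := Projectivization.mk K ![0,1,0] (vne3 1 (by norm_num)))
          (q := Projectivization.mk K ![a 2, 0, a 0] ha2)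
          (r := Projectivization.mk K ![a 2, a 0 + a 2, a 0] (vne3 0 (by simpa using h2)))
          ⟨(mem_line_mk _).2 (by simp [h1]), memB1 _ ((mem_line_mk _).2 (by norm_num))⟩
          ⟨(mem_line_mk _).2 (by simp [h1]; linear_combination a 0 * a 2 * two0),
            memB2 _ ((mem_line_mk _).2 (by norm_num))⟩
          ⟨(mem_line_mk _).2 (by simp [h1]; linear_combination a 0 * a 2 * two0),
            memB4 _ ((mem_line_mk _).2 (by simp; linear_combination (a 0 + a 2) * two0))⟩
          (mk_ne_of _ _ 0 (by norm_num) (by simpa using h2))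
          (mk_ne_of _ _ 0 (by norm_num) (by simpa using h2))
          (mk_ne_of _ _ 1 (by norm_num) (by simpa using hs))
    -- a0 ≠ 0, a1 ≠ 0, a2 = 0
    · have ha2 : (![a 1, a 0, (0:K)] : Fin 3 → K) ≠ 0 := vne3 0 (by simpa using h1)
      by_cases he : a 0 = a 1
      · refine three_le_ncard
          (p := Projectivization.mk K ![0,0,1] (vne3 2 (by norm_num)))
          (q := Projectivization.mk K ![a 1, a 0, 0] ha2)
          (r := Projectivization.mk K ![1,1,1] (vne3 0 (by norm_num)))
          ⟨(mem_line_mk _).2 (by simp [h2]), memB1 _ ((mem_line_mk _).2 (by norm_num))⟩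
          ⟨(mem_line_mk _).2 (by simp [h2]; linear_combination a 0 * a 1 * two0),
            memB3 _ ((mem_line_mk _).2 (by norm_num))⟩
          ⟨(mem_line_mk _).2 (by simp; linear_combination h2 + he + a 1 * two0),
            memB5 _⟩
          (mk_ne_of _ _ 0 (by norm_num) (by simpa using h1))
          (mk_ne_of _ _ 0 (by norm_num) (by norm_num))
          (mk_ne_of _ _ 2 (by norm_num) (by norm_num))
      · have hs : a 0 + a 1 ≠ 0 := fun h => he (by linear_combination h - a 1 * two0)
        refine three_le_ncard
          (p := Projectivization.mk K ![0,0,1] (vne3 2 (by norm_num)))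
          (q := Projectivization.mk K ![a 1, a 0, 0] ha2)
          (r := Projectivization.mk K ![a 1, a 0, a 0 + a 1] (vne3 0 (by simpa using h1)))
          ⟨(mem_line_mk _).2 (by simp [h2]), memB1 _ ((mem_line_mk _).2 (by norm_num))⟩
          ⟨(mem_line_mk _).2 (by simp [h2]; linear_combination a 0 * a 1 * two0),
            memB3 _ ((mem_line_mk _).2 (by norm_num))⟩
          ⟨(mem_line_mk _).2 (by simp [h2]; linear_combination a 0 * a 1 * two0),
            memB4 _ ((mem_line_mk _).2 (by simp; linear_combination (a 0 + a 1) * two0))⟩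
          (mk_ne_of _ _ 0 (by norm_num) (by simpa using h1))
          (mk_ne_of _ _ 0 (by norm_num) (by simpa using h1))
          (mk_ne_of _ _ 2 (by norm_num) (by simpa using hs))
    -- all nonzero
    · refine three_le_ncard
        (p := Projectivization.mk K ![0, a 2, a 1] (vne3 1 (by simpa using h2)))
        (q := Projectivization.mk K ![a 2, 0, a 0] (vne3 0 (by simpa using h2)))
        (r := Projectivization.mk K ![a 1, a 0, 0] (vne3 0 (by simpa using h1)))
        ⟨(mem_line_mk _).2 (by simp; linear_combination a 1 * a 2 * two0),
          memB1 _ ((mem_line_mk _).2 (by norm_num))⟩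
        ⟨(mem_line_mk _).2 (by simp; linear_combination a 0 * a 2 * two0),
          memB2 _ ((mem_line_mk _).2 (by norm_num))⟩
        ⟨(mem_line_mk _).2 (by simp; linear_combination a 0 * a 1 * two0),
          memB3 _ ((mem_line_mk _).2 (by norm_num))⟩
        (mk_ne_of _ _ 0 (by norm_num) (by simpa using h2))
        (mk_ne_of _ _ 0 (by norm_num) (by simpa using h1))
        (mk_ne_of _ _ 1 (by norm_num) (by simpa using h0))
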